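/- The subalgebra k annihilates both characters under the coadjoint action: for every ξ ∈ k and every u ∈ m_1 one has Tr(e_1(ξu − uξ)) = 0 and Tr(e_2(ξu − uξ)) = 0. -/

import Mathlib

open Matrix

/-- The boxes of the right-aligned Young diagram of `μ` (0-based: box `⟨r, s⟩`
corresponds to the box in row `r+1`, `s+1`-th from the right end of its row). -/
abbrev Box (k : ℕ) (μ : Fin k → ℕ) := (r : Fin k) × Fin (μ r)

/-- The nilpotent `e₁` of Jordan type `μ`, sending `b_{r,s} ↦ b_{r,s+1}`. -/
noncomputable def e1 (k : ℕ) (μ : Fin k → ℕ) : Matrix (Box k μ) (Box k μ) ℂ :=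
  Matrix.of fun t u => if t.1 = u.1 ∧ t.2.val = u.2.val + 1 then 1 else 0

/-- The nilpotent `e₂ = e₁ + Σ_{s=1}^{μ_j} E_{(i,s),(j,s)}`. -/
noncomputable def e2 (k : ℕ) (μ : Fin k → ℕ) (i j : Fin k) : Matrix (Box k μ) (Box k μ) ℂ :=
  e1 k μ + Matrix.of fun t u => if t.1 = i ∧ u.1 = j ∧ t.2.val = u.2.val then 1 else 0

/-- `E_m := Σ_{r=i}^{j−m} Σ_{s=1}^{μ_{r+m}} E_{(r+m,s),(r,s)}`. -/
noncomputable def Em (k : ℕ) (μ : Fin k → ℕ) (i j : Fin k) (m : ℕ) :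
    Matrix (Box k μ) (Box k μ) ℂ :=
  Matrix.of fun t u =>
    if i ≤ u.1 ∧ t.1 ≤ j ∧ t.1.val = u.1.val + m ∧ t.2.val = u.2.val then 1 else 0

/-- `m₁ := span{E_{t,u} : s_t < s_u}`. -/
noncomputable def m1 (k : ℕ) (μ : Fin k → ℕ) : Submodule ℂ (Matrix (Box k μ) (Box k μ) ℂ) :=
  Submodule.span ℂ
    {x | ∃ t u : Box k μ, t.2.val < u.2.val ∧ x = Matrix.single t u 1}

/-- `k := span{E_1, …, E_{j−i}}`. -/
noncomputable def fk (k : ℕ) (μ : Fin k → ℕ) (i j : Fin k) :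
    Submodule ℂ (Matrix (Box k μ) (Box k μ) ℂ) :=
  Submodule.span ℂ {x | ∃ m : ℕ, 1 ≤ m ∧ m ≤ j.val - i.val ∧ x = Em k μ i j m}

/-- `m₂ := m₁ + k`. -/
noncomputable def m2 (k : ℕ) (μ : Fin k → ℕ) (i j : Fin k) :
    Submodule ℂ (Matrix (Box k μ) (Box k μ) ℂ) :=
  m1 k μ ⊔ fk k μ i j

/-- The covering partition `λ`. -/
def lam (k : ℕ) (μ : Fin k → ℕ) (i j : Fin k) : Fin k → ℕ :=
  fun r => if r = i then μ i + 1 else if r = j then μ j - 1 else μ r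

/-- `χ_a(x) = Tr(e_a x)`. -/
noncomputable def chi (k : ℕ) (μ : Fin k → ℕ) (ea x : Matrix (Box k μ) (Box k μ) ℂ) : ℂ :=
  (ea * x).trace

/- ### Auxiliary lemmas -/

/-- The extra summand of `e₂`. -/
noncomputable def Fm (k : ℕ) (μ : Fin k → ℕ) (i j : Fin k) : Matrix (Box k μ) (Box k μ) ℂ :=
  Matrix.of fun t u => if t.1 = i ∧ u.1 = j ∧ t.2.val = u.2.val then 1 else 0

lemma e2_eq (k : ℕ) (μ : Fin k → ℕ) (i j : Fin k) : e2 k μ i j = e1 k μ + Fm k μ i j := rfl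

lemma Box.ext' {k : ℕ} {μ : Fin k → ℕ} {a b : Box k μ}
    (h1 : a.1 = b.1) (h2 : a.2.val = b.2.val) : a = b := by
  obtain ⟨a1, a2⟩ := a; obtain ⟨b1, b2⟩ := b
  cases h1; simp_all [Fin.ext_iff]

lemma trace_mul_std {k : ℕ} {μ : Fin k → ℕ} (A : Matrix (Box k μ) (Box k μ) ℂ) (t u : Box k μ) :
    (A * Matrix.single t u (1:ℂ)).trace = A u t := by
  simp [trace, diag, mul_apply, Matrix.single, Finset.sum_ite_eq, ite_and]

lemma L1 {k : ℕ} {μ : Fin k → ℕ} (i j : Fin k) (m : ℕ) (p q : Box k μ) :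
    (e1 k μ * Em k μ i j m) p q =
      if i ≤ q.1 ∧ p.1 ≤ j ∧ p.1.val = q.1.val + m ∧ p.2.val = q.2.val + 1 then 1 else 0 := by
  rw [mul_apply]
  split_ifs with h
  · obtain ⟨h1, h2, h3, h4⟩ := h
    have hq2 : q.2.val < μ p.1 := by have := p.2.isLt; omega
    rw [Finset.sum_eq_single (⟨p.1, ⟨q.2.val, hq2⟩⟩ : Box k μ)]
    · simp [e1, Em, h1, h2, h3, h4]
    · rintro r - hne
      simp only [e1, Em, of_apply]
      by_cases ha : p.1 = r.1 ∧ p.2.val = r.2.val + 1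
      · by_cases hb : i ≤ q.1 ∧ r.1 ≤ j ∧ r.1.val = q.1.val + m ∧ r.2.val = q.2.val
        · exact (hne (Box.ext' ha.1.symm (show r.2.1 = q.2.1 by omega))).elim
        · simp [hb]
      · simp [ha]
    · simp
  · apply Finset.sum_eq_zero
    rintro r -
    simp only [e1, Em, of_apply]
    by_cases ha : p.1 = r.1 ∧ p.2.val = r.2.val + 1
    · by_cases hb : i ≤ q.1 ∧ r.1 ≤ j ∧ r.1.val = q.1.val + m ∧ r.2.val = q.2.val
      · exact absurd ⟨hb.1, ha.1 ▸ hb.2.1, by omega, by omega⟩ h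
      · simp [hb]
    · simp [ha]

lemma R1 {k : ℕ} {μ : Fin k → ℕ} (i j : Fin k) (m : ℕ) (p q : Box k μ) :
    (Em k μ i j m * e1 k μ) p q =
      if i ≤ q.1 ∧ p.1 ≤ j ∧ p.1.val = q.1.val + m ∧ p.2.val = q.2.val + 1
          ∧ p.2.val < μ q.1 then 1 else 0 := by
  rw [mul_apply]
  split_ifs with h
  · obtain ⟨h1, h2, h3, h4, h5⟩ := h
    rw [Finset.sum_eq_single (⟨q.1, ⟨p.2.val, h5⟩⟩ : Box k μ)]
    · simp [e1, Em, h1, h2, h3, h4]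
    · rintro r - hne
      simp only [e1, Em, of_apply]
      by_cases ha : i ≤ r.1 ∧ p.1 ≤ j ∧ p.1.val = r.1.val + m ∧ p.2.val = r.2.val
      · by_cases hb : r.1 = q.1 ∧ r.2.val = q.2.val + 1
        · exact (hne (Box.ext' hb.1 (show r.2.1 = p.2.1 by omega))).elim
        · simp [hb]
      · simp [ha]
    · simp
  · apply Finset.sum_eq_zero
    rintro r -
    simp only [e1, Em, of_apply]
    by_cases ha : i ≤ r.1 ∧ p.1 ≤ j ∧ p.1.val = r.1.val + m ∧ p.2.val = r.2.val
    · by_cases hb : r.1 = q.1 ∧ r.2.val = q.2.val + 1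
      · refine absurd ⟨hb.1 ▸ ha.1, ha.2.1, by omega, by omega, ?_⟩ h
        have := r.2.isLt; rw [← hb.1]; omega
      · simp [hb]
    · simp [ha]

/-- `[e₁, E_m] = 0` when `m ≥ 1` and `μ` is antitone. -/
lemma comm_e1_Em {k : ℕ} {μ : Fin k → ℕ} (hanti : Antitone μ) (i j : Fin k) (m : ℕ)
    (hm : 1 ≤ m) : e1 k μ * Em k μ i j m = Em k μ i j m * e1 k μ := by
  ext p q
  rw [L1, R1]
  by_cases h : i ≤ q.1 ∧ p.1 ≤ j ∧ p.1.val = q.1.val + m ∧ p.2.val = q.2.val + 1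
  · obtain ⟨h1, h2, h3, h4⟩ := h
    have hlt : q.1 ≤ p.1 := by rw [Fin.le_def]; omega
    have : p.2.val < μ q.1 := lt_of_lt_of_le p.2.isLt (hanti hlt)
    rw [if_pos ⟨h1, h2, h3, h4⟩, if_pos ⟨h1, h2, h3, h4, this⟩]
  · rw [if_neg h, if_neg (by tauto)]

lemma FEm_zero {k : ℕ} {μ : Fin k → ℕ} (i j : Fin k) (m : ℕ) (p q : Box k μ)
    (h : p.2.val ≠ q.2.val) : (Fm k μ i j * Em k μ i j m) p q = 0 := by
  rw [mul_apply]
  apply Finset.sum_eq_zero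
  rintro r -
  simp only [Fm, Em, of_apply]
  by_cases ha : p.1 = i ∧ r.1 = j ∧ p.2.val = r.2.val
  · by_cases hb : i ≤ q.1 ∧ r.1 ≤ j ∧ r.1.val = q.1.val + m ∧ r.2.val = q.2.val
    · omega
    · simp [hb]
  · simp [ha]

lemma EmF_zero {k : ℕ} {μ : Fin k → ℕ} (i j : Fin k) (m : ℕ) (p q : Box k μ)
    (h : p.2.val ≠ q.2.val) : (Em k μ i j m * Fm k μ i j) p q = 0 := by
  rw [mul_apply]
  apply Finset.sum_eq_zero
  rintro r -
  simp only [Fm, Em, of_apply]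
  by_cases ha : i ≤ r.1 ∧ p.1 ≤ j ∧ p.1.val = r.1.val + m ∧ p.2.val = r.2.val
  · by_cases hb : r.1 = i ∧ q.1 = j ∧ r.2.val = q.2.val
    · omega
    · simp [hb]
  · simp [ha]

/-- The generator case. -/
lemma gen_case {k : ℕ} {μ : Fin k → ℕ} (hanti : Antitone μ) (i j : Fin k)
    (e : Matrix (Box k μ) (Box k μ) ℂ)
    (he : e = e1 k μ ∨ e = e2 k μ i j)
    (m : ℕ) (hm : 1 ≤ m) (t u : Box k μ) (htu : t.2.val < u.2.val) :
    (e * (Em k μ i j m * Matrix.single t u 1 -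
      Matrix.single t u 1 * Em k μ i j m)).trace = 0 := by
  have key : ∀ f : Matrix (Box k μ) (Box k μ) ℂ, f * Em k μ i j m = Em k μ i j m * f →
      (f * (Em k μ i j m * Matrix.single t u 1 -
        Matrix.single t u 1 * Em k μ i j m)).trace = 0 := by
    intro f hf
    rw [mul_sub, trace_sub, ← mul_assoc, ← mul_assoc, trace_mul_cycle f _ (Em k μ i j m),
      ← hf, sub_self]
  rcases he with rfl | rfl
  · exact key _ (comm_e1_Em hanti i j m hm)
  · rw [e2_eq, add_mul, trace_add, key _ (comm_e1_Em hanti i j m hm), zero_add,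
      mul_sub, trace_sub, ← mul_assoc, ← mul_assoc,
      trace_mul_cycle (Fm k μ i j) _ (Em k μ i j m),
      trace_mul_std, trace_mul_std, FEm_zero _ _ _ _ _ (by omega),
      EmF_zero _ _ _ _ _ (by omega), sub_zero]

/-- Bilinear extension to spans. -/
lemma span_bilinear {k : ℕ} {μ : Fin k → ℕ} (e : Matrix (Box k μ) (Box k μ) ℂ)
    (S T : Set (Matrix (Box k μ) (Box k μ) ℂ))
    (h : ∀ ξ ∈ S, ∀ x ∈ T, (e * (ξ * x - x * ξ)).trace = 0) :
    ∀ ξ ∈ Submodule.span ℂ S, ∀ x ∈ Submodule.span ℂ T,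
      (e * (ξ * x - x * ξ)).trace = 0 := by
  intro ξ hξ
  induction hξ using Submodule.span_induction with
  | mem ξ hξS =>
    intro x hx
    induction hx using Submodule.span_induction with
    | mem x hxT => exact h ξ hξS x hxT
    | zero => simp
    | add x y _ _ hx hy =>
      have : ξ * (x + y) - (x + y) * ξ = (ξ * x - x * ξ) + (ξ * y - y * ξ) := by
        noncomm_ring
      rw [this, mul_add, trace_add, hx, hy, add_zero]
    | smul c x _ hx =>
      have : ξ * (c • x) - (c • x) * ξ = c • (ξ * x - x * ξ) := by
        rw [mul_smul_comm, smul_mul_assoc, smul_sub]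
      rw [this, mul_smul_comm, trace_smul, hx, smul_zero]
  | zero => intro x hx; simp
  | add ξ η _ _ hξ' hη' =>
    intro x hx
    have : (ξ + η) * x - x * (ξ + η) = (ξ * x - x * ξ) + (η * x - x * η) := by
      noncomm_ring
    rw [this, mul_add, trace_add, hξ' x hx, hη' x hx, add_zero]
  | smul c ξ _ hξ' =>
    intro x hx
    have : (c • ξ) * x - x * (c • ξ) = c • (ξ * x - x * ξ) := by
      rw [mul_smul_comm, smul_mul_assoc, smul_sub]
    rw [this, mul_smul_comm, trace_smul, hξ' x hx, smul_zero]

/-- The subalgebra `k` annihilates both characters under the coadjoint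
action. -/
theorem stmt11
    (k : ℕ) (n : ℕ) (μ : Fin k → ℕ)
    (hpos : ∀ r, 0 < μ r) (hanti : Antitone μ)
    (hn : ∑ r : Fin k, μ r = n)
    (i j : Fin k) (hij : i < j)
    (hi : ∀ r, r < i → μ i < μ r)
    (hj : ∀ r, j < r → μ r < μ j)
    (hcase : (j : ℕ) = (i : ℕ) + 1 ∨ μ i = μ j)
    :
    ∀ ξ ∈ fk k μ i j, ∀ u ∈ m1 k μ,
      (e1 k μ * (ξ * u - u * ξ)).trace = 0 ∧
      (e2 k μ i j * (ξ * u - u * ξ)).trace = 0 := by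
  intro ξ hξ u hu
  constructor
  · refine span_bilinear (e1 k μ) _ _ ?_ ξ hξ u hu
    rintro x ⟨m, hm1, hm2, rfl⟩ y ⟨t, u', htu, rfl⟩
    exact gen_case hanti i j _ (Or.inl rfl) m hm1 t u' htu
  · refine span_bilinear (e2 k μ i j) _ _ ?_ ξ hξ u hu
    rintro x ⟨m, hm1, hm2, rfl⟩ y ⟨t, u', htu, rfl⟩
    exact gen_case hanti i j _ (Or.inr rfl) m hm1 t u' htu
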